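/- Each growth class [f]∼ is a subsemigroup of Ω∞ under composition: if g ∼ f and h ∼ f, then g ∘ h ∼ f. -/
import Mathlib


def OmegaInf (g : ℕ → ℕ) : Prop := ∀ n : ℕ, n < g n ∧ g n ≤ g (n + 1)

def Prec (f g : ℕ → ℕ) : Prop := ∃ n₀ : ℕ, ∀ n > n₀, f n < g n

def SimGrowth (f g : ℕ → ℕ) : Prop := ∃ k : ℕ, Prec f (g^[k]) ∧ Prec g (f^[k])

private lemma omega_mono {g : ℕ → ℕ} (hg : OmegaInf g) : Monotone g :=
  monotone_nat_of_le_succ fun n => (hg n).2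

private lemma omega_le {g : ℕ → ℕ} (hg : OmegaInf g) (n : ℕ) : n ≤ g n := (hg n).1.le

private lemma omega_comp {g h : ℕ → ℕ} (hg : OmegaInf g) (hh : OmegaInf h) :
    OmegaInf (g ∘ h) := fun n =>
  ⟨lt_of_lt_of_le (hh n).1 (omega_le hg _),
   omega_mono hg (omega_mono hh (Nat.le_succ n))⟩

private lemma iter_le_iter {f : ℕ → ℕ} (hf : OmegaInf f) {k k' : ℕ} (hk : k ≤ k') (n : ℕ) :
    f^[k] n ≤ f^[k'] n := by
  induction hk with
  | refl => exact le_rfl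
  | step _ ih =>
    calc f^[k] n ≤ _ := ih
      _ ≤ _ := by rw [Function.iterate_succ_apply']; exact omega_le hf _

private lemma comp_iter_ge {g h : ℕ → ℕ} (hg : OmegaInf g) (hh : OmegaInf h) (k n : ℕ) :
    g^[k] n ≤ (g ∘ h)^[k] n := by
  induction k with
  | zero => exact le_rfl
  | succ k ih =>
    rw [Function.iterate_succ_apply', Function.iterate_succ_apply']
    calc g (g^[k] n) ≤ g (h (g^[k] n)) := omega_mono hg (omega_le hh _)
      _ ≤ g (h ((g ∘ h)^[k] n)) := omega_mono hg (omega_mono hh ih)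

/-- Each growth class [f]∼ is a subsemigroup of Ω∞ under composition:
if g ∼ f and h ∼ f then g ∘ h ∼ f. -/
theorem growth_class_subsemigroup (f g h : ℕ → ℕ)
    (hf : OmegaInf f) (hg : OmegaInf g) (hh : OmegaInf h)
    (h₁ : SimGrowth g f) (h₂ : SimGrowth h f) :
    SimGrowth (g ∘ h) f := by
  obtain ⟨k1, ⟨a1, hgf⟩, ⟨b1, hfg⟩⟩ := h₁
  obtain ⟨k2, ⟨a2, hhf⟩, -⟩ := h₂
  refine ⟨k1 + k2, ⟨max a1 a2, ?_⟩, ⟨b1, ?_⟩⟩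
  · intro n hn
    have h1 : g (h n) < f^[k1] (h n) :=
      hgf _ (lt_trans (lt_of_le_of_lt (le_max_left _ _) hn) (hh n).1)
    have h2 : h n ≤ f^[k2] n := (hhf n (lt_of_le_of_lt (le_max_right _ _) hn)).le
    calc (g ∘ h) n = g (h n) := rfl
      _ < f^[k1] (h n) := h1
      _ ≤ f^[k1] (f^[k2] n) := (omega_mono hf).iterate k1 h2
      _ = f^[k1 + k2] n := (Function.iterate_add_apply f k1 k2 n).symm
  · intro n hn
    calc f n < g^[k1] n := hfg n hn
      _ ≤ (g ∘ h)^[k1] n := comp_iter_ge hg hh k1 n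
      _ ≤ (g ∘ h)^[k1 + k2] n :=
        iter_le_iter (omega_comp hg hh) (Nat.le_add_right _ _) n
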